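/- There exists ε₀ > 0 such that for every ε ∈ (0, ε₀): if ξ₀ = (g/4)·ln(m) + ε is of type 1 and T₁ is a time with ξ'_{ξ₀}(T₁)/θ'_{ξ₀}(T₁) = −1 while ξ'_{ξ₀}(t) < 0 and θ'_{ξ₀}(t) > 0 for all t ∈ (0, T₁], then ξ_{ξ₀}(T₁) ≤ (g/4)·ln(m). -/

import Mathlib

/-- The constant `m = m₁ + m₂ + 2/g`. -/
noncomputable def mconst (g m₁ m₂ : ℕ) : ℝ := (m₁ : ℝ) + (m₂ : ℝ) + 2 / (g : ℝ)

/-- The angle `θ* = arctan √(m₁/m₂)`. -/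
noncomputable def thetaStar (m₁ m₂ : ℕ) : ℝ :=
  Real.arctan (Real.sqrt ((m₁ : ℝ) / (m₂ : ℝ)))

/-- `l(θ) = m₁ cos² θ - m₂ sin² θ`. -/
noncomputable def lfun (m₁ m₂ : ℕ) (θ : ℝ) : ℝ :=
  (m₁ : ℝ) * Real.cos θ ^ 2 - (m₂ : ℝ) * Real.sin θ ^ 2

/-- `(ξ, θ, α)` is a (globally defined) solution of the ODE system (*):
`ξ' = cos α · sin 2θ`, `θ' = sin α · sin 2θ`,
`α' = sin α · sin 2θ · (exp((4/g)ξ) - m) + 2 cos α · l(θ)`. -/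
def IsSolution (g m₁ m₂ : ℕ) (ξ θ α : ℝ → ℝ) : Prop :=
  ∀ t : ℝ,
    HasDerivAt ξ (Real.cos (α t) * Real.sin (2 * θ t)) t ∧
    HasDerivAt θ (Real.sin (α t) * Real.sin (2 * θ t)) t ∧
    HasDerivAt α
      (Real.sin (α t) * Real.sin (2 * θ t) *
          (Real.exp (4 / (g : ℝ) * ξ t) - mconst g m₁ m₂) +
        2 * Real.cos (α t) * lfun m₁ m₂ (θ t)) t

/-- `Ξ Θ A` is the family of solutions of (*) indexed by the initial value `ξ₀`,
with initial condition `(ξ, θ, α)(0) = (ξ₀, θ*, π/2)`. -/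
def IsShootingFamily (g m₁ m₂ : ℕ) (Ξ Θ A : ℝ → ℝ → ℝ) : Prop :=
  ∀ ξ₀ : ℝ, IsSolution g m₁ m₂ (Ξ ξ₀) (Θ ξ₀) (A ξ₀) ∧
    Ξ ξ₀ 0 = ξ₀ ∧ Θ ξ₀ 0 = thetaStar m₁ m₂ ∧ A ξ₀ 0 = Real.pi / 2

/-- `ξ₀` is of type 1: there is `T > 0` with `θ_{ξ₀}(T) = θ*` and
`ξ'_{ξ₀}(t) ≠ 0` for all `t ∈ (0, T)`. -/
def Type1 (m₁ m₂ : ℕ) (Ξ Θ A : ℝ → ℝ → ℝ) (ξ₀ : ℝ) : Prop :=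
  ∃ T > (0 : ℝ), Θ ξ₀ T = thetaStar m₁ m₂ ∧
    ∀ t ∈ Set.Ioo (0 : ℝ) T, Real.cos (A ξ₀ t) * Real.sin (2 * Θ ξ₀ t) ≠ 0

open Real Set

noncomputable def th1 (m₁ m₂ : ℕ) : ℝ := (thetaStar m₁ m₂ + Real.pi / 2) / 2
noncomputable def Kc (m₁ m₂ : ℕ) : ℝ := Real.sin (thetaStar m₁ m₂) ^ (2 * m₁)
noncomputable def Wone (m₁ m₂ : ℕ) : ℝ :=
  Real.sin (th1 m₁ m₂) ^ m₁ * Real.cos (th1 m₁ m₂) ^ m₂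
noncomputable def cOne (g m₁ m₂ : ℕ) : ℝ := 4 * mconst g m₁ m₂ / (g : ℝ)
noncomputable def cSix (g m₁ m₂ : ℕ) : ℝ :=
  min (cOne g m₁ m₂ * (th1 m₁ m₂ - thetaStar m₁ m₂) / 2)
    (1 / (2 * (th1 m₁ m₂ - thetaStar m₁ m₂)))
noncomputable def del (g m₁ m₂ : ℕ) (ε : ℝ) : ℝ :=
  mconst g m₁ m₂ * (Real.exp (4 * ε / (g : ℝ)) - 1)

lemma monoOn_of_hasDeriv {f F : ℝ → ℝ} {a b : ℝ}
    (hF : ∀ t ∈ Icc a b, HasDerivAt f (F t) t)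
    (h0 : ∀ t ∈ Icc a b, 0 ≤ F t) : MonotoneOn f (Icc a b) := by
  apply monotoneOn_of_deriv_nonneg (convex_Icc a b)
  · exact fun t ht => ((hF t ht).continuousAt).continuousWithinAt
  · intro x hx
    rw [interior_Icc] at hx
    exact ((hF x (Ioo_subset_Icc_self hx)).differentiableAt).differentiableWithinAt
  · intro x hx
    rw [interior_Icc] at hx
    rw [(hF x (Ioo_subset_Icc_self hx)).deriv]
    exact h0 x (Ioo_subset_Icc_self hx)

lemma antiOn_of_hasDeriv {f F : ℝ → ℝ} {a b : ℝ}
    (hF : ∀ t ∈ Icc a b, HasDerivAt f (F t) t)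
    (h0 : ∀ t ∈ Icc a b, F t ≤ 0) : AntitoneOn f (Icc a b) := by
  apply antitoneOn_of_deriv_nonpos (convex_Icc a b)
  · exact fun t ht => ((hF t ht).continuousAt).continuousWithinAt
  · intro x hx
    rw [interior_Icc] at hx
    exact ((hF x (Ioo_subset_Icc_self hx)).differentiableAt).differentiableWithinAt
  · intro x hx
    rw [interior_Icc] at hx
    rw [(hF x (Ioo_subset_Icc_self hx)).deriv]
    exact h0 x (Ioo_subset_Icc_self hx)

-- P step: derivative of u*W^2 - 2δ(θ-τ) is ≤ 0
lemma algP (c σ s Δ l W u δ : ℝ) (hσ : 0 < σ) (hσ1 : σ ≤ 1) (hs : 0 < s)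
    (hc : c = -(u*σ)) (hu0 : 0 ≤ u) (hu1 : u ≤ 1) (hσ2 : 1 ≤ 2*σ^2)
    (hl : l ≤ 0) (hΔ0 : 0 ≤ Δ) (hΔ : Δ ≤ δ) (hW0 : 0 < W) (hW1 : W ≤ 1) :
    ((σ*s*Δ + 2*c*l) / σ^2) * W^2 + (-c/σ) * (2*W*(2*l*σ*W)) - 2*δ*(σ*s) ≤ 0 := by
  have h1 : ((σ*s*Δ + 2*c*l) / σ^2) * W^2 + (-c/σ) * (2*W*(2*l*σ*W)) - 2*δ*(σ*s)
      = ((s*Δ - 2*u*l)*W^2 + (4*u*l*σ^2*W^2 - 2*δ*σ^2*s)*1)/σ := by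
    rw [hc]; field_simp; ring
  rw [h1]
  apply div_nonpos_of_nonpos_of_nonneg _ hσ.le
  have hW2 : W^2 ≤ 1 := by nlinarith
  have hδ0 : (0:ℝ) ≤ δ := le_trans hΔ0 hΔ
  have key1 : s*Δ*W^2 ≤ 2*δ*σ^2*s := by
    nlinarith [mul_nonneg (mul_nonneg hs.le hΔ0) (sub_nonneg.2 hW2),
      mul_nonneg (mul_nonneg hs.le hδ0) (sub_nonneg.2 hσ2), mul_nonneg hs.le (sub_nonneg.2 hΔ)]
  nlinarith [mul_nonneg (mul_nonneg hu0 (neg_nonneg.2 hl)) (sub_nonneg.2 hσ2), sq_nonneg W]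

-- Q step (seed case A)
lemma algQ (c σ s Δ l u q : ℝ) (hσ : 0 < σ) (hσ1 : σ ≤ 1) (hs : 0 < s)
    (hc : c = -(u*σ)) (hu0 : 0 ≤ u) (hl : l ≤ 0) (hq : 0 ≤ q) (hΔ : q ≤ Δ) :
    q*(σ*s) ≤ (σ*s*Δ + 2*c*l)/σ^2 := by
  have h1 : (σ*s*Δ + 2*c*l)/σ^2 = (s*Δ - 2*u*l)/σ := by rw [hc]; field_simp; ring
  rw [h1, le_div_iff₀ hσ]
  have hσsq : σ^2 ≤ 1 := by nlinarith
  nlinarith [mul_nonneg (mul_nonneg hq hs.le) (sub_nonneg.2 hσsq),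
    mul_nonneg hs.le (sub_nonneg.2 hΔ), mul_nonneg hu0 (neg_nonneg.2 hl)]

-- R step (seed case B)
lemma algR (c σ s u u1 : ℝ) (hσ : 0 < σ) (hs : 0 < s)
    (hc : c = -(u*σ)) (hu : u ≤ u1) : 0 ≤ u1*(σ*s) + c*s := by
  rw [hc]; nlinarith [mul_pos hσ hs]

-- T step (transport)
lemma algT (c σ s Δ l u W : ℝ) (hσ : 0 < σ) (hσ1 : σ ≤ 1) (hs : 0 < s)
    (hc : c = -(u*σ)) (hu0 : 0 ≤ u) (hl : l ≤ 0) (hΔ0 : 0 ≤ Δ) (hW0 : 0 ≤ W) :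
    0 ≤ ((σ*s*Δ + 2*c*l)/σ^2) * W + (-c/σ)*(2*l*σ*W) := by
  have h1 : ((σ*s*Δ + 2*c*l)/σ^2) * W + (-c/σ)*(2*l*σ*W)
      = ((s*Δ - 2*u*l) + 2*l*u*σ^2)*W/σ := by rw [hc]; field_simp; ring
  rw [h1]
  apply div_nonneg _ hσ.le
  apply mul_nonneg _ hW0
  have hσsq : σ^2 ≤ 1 := by nlinarith
  nlinarith [mul_nonneg (mul_nonneg hu0 (neg_nonneg.2 hl)) (sub_nonneg.2 hσsq),
    mul_nonneg hs.le hΔ0]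

-- S step (final drop)
lemma algS (c σ s u A W sθ cθ : ℝ) (hσ : 0 < σ) (hs : 0 < s)
    (hc : c = -(u*σ)) (hu0 : 0 ≤ u) (hA : A ≤ u*W) (hA0 : 0 ≤ A)
    (hsθ0 : 0 ≤ sθ) (hsθ1 : sθ ≤ 1) (hcθ : 0 < cθ) (hWc : W ≤ cθ) (hW0 : 0 ≤ W) :
    0 ≤ A * ((-sθ * (σ*s))/cθ) - c*s := by
  rw [hc]
  have h1 : A * ((-sθ * (σ*s))/cθ) - -(u*σ)*s = (u*σ*s*cθ - A*sθ*σ*s)/cθ := by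
    field_simp; ring
  rw [h1]
  apply div_nonneg _ hcθ.le
  have h2 : A*sθ ≤ u*cθ := by nlinarith
  nlinarith [mul_pos hσ hs]

lemma lfun_nonpos (m₁ m₂ : ℕ) (hm₁ : 0 < m₁) (hm₂ : 0 < m₂) (x : ℝ)
    (hx1 : thetaStar m₁ m₂ ≤ x) (hx2 : x < Real.pi/2) : lfun m₁ m₂ x ≤ 0 := by
  have hm₁' : (0:ℝ) < (m₁:ℝ) := by exact_mod_cast hm₁
  have hm₂' : (0:ℝ) < (m₂:ℝ) := by exact_mod_cast hm₂
  have hτ0 : 0 < thetaStar m₁ m₂ := by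
    unfold thetaStar
    rw [show (0:ℝ) = Real.arctan 0 by simp]
    exact Real.arctan_strictMono (by rw [Real.sqrt_pos]; positivity)
  have hmem : thetaStar m₁ m₂ ∈ Set.Ioo (-(Real.pi/2)) (Real.pi/2) :=
    Real.arctan_mem_Ioo _
  have htan : Real.sqrt ((m₁:ℝ)/(m₂:ℝ)) ≤ Real.tan x := by
    rw [← Real.tan_arctan (Real.sqrt ((m₁:ℝ)/(m₂:ℝ)))]
    rcases eq_or_lt_of_le hx1 with h | h
    · rw [← h]; unfold thetaStar; exact le_rfl
    · exact le_of_lt (Real.strictMonoOn_tan hmem ⟨by linarith [Real.pi_pos], hx2⟩ h)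
  have hcos : 0 < Real.cos x :=
    Real.cos_pos_of_mem_Ioo ⟨by linarith [Real.pi_pos], hx2⟩
  have htan2 : (m₁:ℝ)/(m₂:ℝ) ≤ Real.tan x ^ 2 := by
    have h0 : 0 ≤ Real.sqrt ((m₁:ℝ)/(m₂:ℝ)) := Real.sqrt_nonneg _
    nlinarith [Real.sq_sqrt (le_of_lt (div_pos hm₁' hm₂'))]
  rw [Real.tan_eq_sin_div_cos] at htan2
  unfold lfun
  rw [div_pow, div_le_div_iff₀ hm₂' (by positivity)] at htan2
  nlinarith

lemma pos_of_mul_pos_right' {a b : ℝ} (h : 0 < a * b) (hb : 0 < b) : 0 < a := by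
  nlinarith

lemma nonpos_of_mul_neg_right' {a b : ℝ} (h : a * b < 0) (hb : 0 < b) : a ≤ 0 := by
  nlinarith

lemma two_sq_ge {c σ : ℝ} (hc : c ≤ 0) (hpy : σ ^ 2 + c ^ 2 = 1) (h2 : -c ≤ σ) :
    1 ≤ 2 * σ ^ 2 := by nlinarith

lemma We2_le {W2 δ τ θe : ℝ} (hδ : 0 < δ) (hτ : 0 < τ) (hθ : θe < Real.pi / 2)
    (h : W2 ≤ 2 * δ * (θe - τ)) : W2 ≤ Real.pi * δ := by nlinarith

lemma pos_of_one_le_mul {a b : ℝ} (h : 1 ≤ a * b) (ha : 0 < a) : 0 < b := by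
  nlinarith

set_option maxHeartbeats 1000000 in
lemma mainlem (g m₁ m₂ : ℕ) (hg1 : 1 ≤ g) (hm₁ : 0 < m₁) (hm₂ : 0 < m₂)
    (ξ θ α : ℝ → ℝ) (hsol : IsSolution g m₁ m₂ ξ θ α)
    (ε : ℝ) (hε : 0 < ε)
    (hξ0 : ξ 0 = (g : ℝ) / 4 * Real.log (mconst g m₁ m₂) + ε)
    (hθ0 : θ 0 = thetaStar m₁ m₂) (hα0 : α 0 = Real.pi / 2)
    (T₁ : ℝ) (hT : 0 < T₁)
    (hratio : Real.cos (α T₁) * Real.sin (2 * θ T₁) =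
      -(Real.sin (α T₁) * Real.sin (2 * θ T₁)))
    (hsign : ∀ t ∈ Set.Ioc 0 T₁,
      Real.cos (α t) * Real.sin (2 * θ t) < 0 ∧ 0 < Real.sin (α t) * Real.sin (2 * θ t))
    (hs1 : Real.pi * del g m₁ m₂ ε < Kc m₁ m₂ * Real.cos (th1 m₁ m₂) ^ (2 * m₂))
    (hs2 : 1 ≤ cSix g m₁ m₂ * Wone m₁ m₂ *
      (Real.log (Real.cos (th1 m₁ m₂)) +
        1 / (2 * (m₂ : ℝ)) * Real.log (Kc m₁ m₂ / (Real.pi * del g m₁ m₂ ε)))) :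
    ξ T₁ ≤ (g : ℝ) / 4 * Real.log (mconst g m₁ m₂) := by
  have hm₁' : (0:ℝ) < (m₁:ℝ) := by exact_mod_cast hm₁
  have hm₂' : (0:ℝ) < (m₂:ℝ) := by exact_mod_cast hm₂
  have hg0 : (0:ℝ) < (g:ℝ) := by exact_mod_cast Nat.lt_of_lt_of_le Nat.zero_lt_one hg1
  have hM0 : 0 < mconst g m₁ m₂ := by unfold mconst; positivity
  have hτ0 : 0 < thetaStar m₁ m₂ := by
    unfold thetaStar
    rw [show (0:ℝ) = Real.arctan 0 by simp]
    exact Real.arctan_strictMono (by rw [Real.sqrt_pos]; positivity)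
  have hτπ : thetaStar m₁ m₂ < Real.pi/2 := Real.arctan_lt_pi_div_two _
  have hπ : 0 < Real.pi := Real.pi_pos
  -- θ1 facts
  have hθ1a : thetaStar m₁ m₂ < th1 m₁ m₂ := by unfold th1; linarith
  have hθ1b : th1 m₁ m₂ < Real.pi/2 := by unfold th1; linarith
  have hθ10 : 0 < th1 m₁ m₂ := by linarith
  have hcosθ1 : 0 < Real.cos (th1 m₁ m₂) := Real.cos_pos_of_mem_Ioo ⟨by linarith, hθ1b⟩
  have hsinθ1 : 0 < Real.sin (th1 m₁ m₂) := Real.sin_pos_of_pos_of_lt_pi hθ10 (by linarith)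
  have hW1 : 0 < Wone m₁ m₂ := by unfold Wone; positivity
  have hKc : 0 < Kc m₁ m₂ := by
    unfold Kc
    have : 0 < Real.sin (thetaStar m₁ m₂) := Real.sin_pos_of_pos_of_lt_pi hτ0 (by linarith)
    positivity
  have hc1 : 0 < cOne g m₁ m₂ := by unfold cOne; positivity
  have hc6 : 0 < cSix g m₁ m₂ := by
    unfold cSix
    exact lt_min (div_pos (mul_pos hc1 (sub_pos.2 hθ1a)) two_pos)
      (div_pos one_pos (by linarith))
  have hδ0 : 0 < del g m₁ m₂ ε := by
    unfold del
    apply mul_pos hM0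
    have h4 : (0:ℝ) < 4*ε/(g:ℝ) := by positivity
    linarith [Real.add_one_le_exp (4*ε/(g:ℝ))]
  set M := mconst g m₁ m₂ with hMdef
  set τ := thetaStar m₁ m₂ with hτdef
  set θ1 := th1 m₁ m₂ with hθ1def
  set δ := del g m₁ m₂ ε with hδdef
  set L := (g:ℝ)/4 * Real.log M with hLdef
  have hexpL : Real.exp (4/(g:ℝ) * L) = M := by
    rw [hLdef, show 4/(g:ℝ) * ((g:ℝ)/4*Real.log M) = Real.log M by field_simp]
    exact Real.exp_log hM0
  have hdξ : ∀ t, HasDerivAt ξ (Real.cos (α t) * Real.sin (2*θ t)) t := fun t => (hsol t).1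
  have hdθ : ∀ t, HasDerivAt θ (Real.sin (α t) * Real.sin (2*θ t)) t := fun t => (hsol t).2.1
  have hdα : ∀ t, HasDerivAt α (Real.sin (α t) * Real.sin (2*θ t) *
      (Real.exp (4/(g:ℝ) * ξ t) - M) + 2*Real.cos (α t)*lfun m₁ m₂ (θ t)) t :=
    fun t => (hsol t).2.2
  have hcontθ : Continuous θ := by
    rw [continuous_iff_continuousAt]; exact fun t => (hdθ t).continuousAt
  -- sign facts
  have hs0 : 0 < Real.sin (2*θ 0) := by
    rw [hθ0]
    exact Real.sin_pos_of_pos_of_lt_pi (by linarith) (by linarith)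
  have hspos : ∀ t ∈ Icc 0 T₁, 0 < Real.sin (2*θ t) := by
    intro t ht
    by_contra h
    push_neg at h
    have hcs : ContinuousOn (fun r => Real.sin (2*θ r)) (Icc 0 t) :=
      (Real.continuous_sin.comp (continuous_const.mul hcontθ)).continuousOn
    obtain ⟨t', ht', h0⟩ := intermediate_value_Icc' ht.1 hcs ⟨h, hs0.le⟩
    have h0' : Real.sin (2*θ t') = 0 := h0
    rcases eq_or_lt_of_le ht'.1 with he | he
    · rw [← he] at h0'; linarith [hs0]
    · have := (hsign t' ⟨he, le_trans ht'.2 ht.2⟩).2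
      rw [h0'] at this
      simp at this
  have hσpos : ∀ t ∈ Icc 0 T₁, 0 < Real.sin (α t) := by
    intro t ht
    rcases eq_or_lt_of_le ht.1 with he | he
    · rw [← he, hα0]; simp
    · exact pos_of_mul_pos_right' (hsign t ⟨he, ht.2⟩).2 (hspos t ht)
  have hcle : ∀ t ∈ Icc 0 T₁, Real.cos (α t) ≤ 0 := by
    intro t ht
    rcases eq_or_lt_of_le ht.1 with he | he
    · rw [← he, hα0]; simp
    · exact nonpos_of_mul_neg_right' (hsign t ⟨he, ht.2⟩).1 (hspos t ht)
  have hθmono : MonotoneOn θ (Icc 0 T₁) :=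
    monoOn_of_hasDeriv (fun t _ => hdθ t)
      (fun t ht => (mul_pos (hσpos t ht) (hspos t ht)).le)
  have hθge : ∀ t ∈ Icc 0 T₁, τ ≤ θ t := by
    intro t ht
    rw [← hθ0]
    exact hθmono (left_mem_Icc.2 hT.le) ht ht.1
  have hθlt : ∀ t ∈ Icc 0 T₁, θ t < Real.pi/2 := by
    intro t ht
    by_contra h
    push_neg at h
    obtain ⟨t', ht', h0⟩ := intermediate_value_Icc ht.1 hcontθ.continuousOn
      ⟨by rw [hθ0]; linarith, h⟩
    have := hspos t' ⟨ht'.1, le_trans ht'.2 ht.2⟩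
    rw [h0] at this
    rw [show 2*(Real.pi/2) = Real.pi by ring] at this
    simp [Real.sin_pi] at this
  have hsinθ : ∀ t ∈ Icc 0 T₁, 0 < Real.sin (θ t) ∧ Real.sin (θ t) ≤ 1 := by
    intro t ht
    exact ⟨Real.sin_pos_of_pos_of_lt_pi (by linarith [hθge t ht]) (by linarith [hθlt t ht]),
      Real.sin_le_one _⟩
  have hcosθ : ∀ t ∈ Icc 0 T₁, 0 < Real.cos (θ t) ∧ Real.cos (θ t) ≤ 1 := by
    intro t ht
    exact ⟨Real.cos_pos_of_mem_Ioo ⟨by linarith [hθge t ht], hθlt t ht⟩, Real.cos_le_one _⟩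
  have hl : ∀ t ∈ Icc 0 T₁, lfun m₁ m₂ (θ t) ≤ 0 := fun t ht =>
    lfun_nonpos m₁ m₂ hm₁ hm₂ (θ t) (hθge t ht) (hθlt t ht)
  -- contradiction setup
  by_contra hcon
  push_neg at hcon
  have hξanti : AntitoneOn ξ (Icc 0 T₁) := by
    apply antiOn_of_hasDeriv (fun t _ => hdξ t)
    intro t ht
    rcases eq_or_lt_of_le ht.1 with h | h
    · rw [← h, hα0]; simp
    · exact (hsign t ⟨h, ht.2⟩).1.le
  have hvpos : ∀ t ∈ Icc 0 T₁, L < ξ t := fun t ht =>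
    lt_of_lt_of_le hcon (hξanti ht (right_mem_Icc.2 hT.le) ht.2)
  have hvle : ∀ t ∈ Icc 0 T₁, ξ t ≤ L + ε := by
    intro t ht
    rw [← hξ0]
    exact hξanti (left_mem_Icc.2 hT.le) ht ht.1
  -- X bounds
  have hXub : ∀ t ∈ Icc 0 T₁, Real.exp (4/(g:ℝ) * ξ t) - M ≤ δ := by
    intro t ht
    have h1 : Real.exp (4/(g:ℝ) * ξ t) ≤ Real.exp (4/(g:ℝ)*(L+ε)) := by
      apply Real.exp_le_exp.2
      exact mul_le_mul_of_nonneg_left (hvle t ht) (by positivity)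
    have h2 : Real.exp (4/(g:ℝ)*(L+ε)) = M * Real.exp (4*ε/(g:ℝ)) := by
      rw [show 4/(g:ℝ)*(L+ε) = 4/(g:ℝ)*L + 4*ε/(g:ℝ) by field_simp,
        Real.exp_add, hexpL]
    rw [hδdef]
    unfold del
    rw [← hMdef]
    linarith
  have hXlb : ∀ t ∈ Icc 0 T₁, cOne g m₁ m₂ * (ξ t - L) ≤ Real.exp (4/(g:ℝ)*ξ t) - M := by
    intro t ht
    have h2 : Real.exp (4/(g:ℝ)*ξ t) = M * Real.exp (4/(g:ℝ)*(ξ t - L)) := by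
      rw [← hexpL, ← Real.exp_add]
      ring_nf
    have h3 := Real.add_one_le_exp (4/(g:ℝ)*(ξ t - L))
    unfold cOne
    rw [← hMdef, h2]
    have hgg : (0:ℝ) < (g:ℝ) := hg0
    rw [div_mul_eq_mul_div, div_le_iff₀ hgg]
    have h5 := mul_le_mul_of_nonneg_left h3 hM0.le
    have h6 : M*(4/(g:ℝ)*(ξ t - L)) * (g:ℝ) = 4*M*(ξ t - L) := by field_simp
    have h7 := mul_le_mul_of_nonneg_right
      (by linarith : M*(4/(g:ℝ)*(ξ t - L)) ≤ M*Real.exp (4/(g:ℝ)*(ξ t - L)) - M) hgg.le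
    linarith
  have hXpos : ∀ t ∈ Icc 0 T₁, 0 < Real.exp (4/(g:ℝ) * ξ t) - M := by
    intro t ht
    exact lt_of_lt_of_le (mul_pos hc1 (by linarith [hvpos t ht])) (hXlb t ht)
  have hap : ∀ t ∈ Icc 0 T₁, 0 < Real.sin (α t) * Real.sin (2*θ t) *
      (Real.exp (4/(g:ℝ) * ξ t) - M) + 2*Real.cos (α t)*lfun m₁ m₂ (θ t) := by
    intro t ht
    have h1 := mul_pos (mul_pos (hσpos t ht) (hspos t ht)) (hXpos t ht)
    have h2 := mul_nonneg (neg_nonneg.2 (hcle t ht)) (neg_nonneg.2 (hl t ht))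
    linarith
  -- u facts
  have hdu : ∀ t ∈ Icc 0 T₁, HasDerivAt (fun r => -Real.cos (α r)/Real.sin (α r))
      ((Real.sin (α t) * Real.sin (2*θ t) * (Real.exp (4/(g:ℝ) * ξ t) - M) +
        2*Real.cos (α t)*lfun m₁ m₂ (θ t)) / (Real.sin (α t))^2) t := by
    intro t ht
    have hσne := (hσpos t ht).ne'
    set AP := Real.sin (α t) * Real.sin (2*θ t) * (Real.exp (4/(g:ℝ) * ξ t) - M) +
        2*Real.cos (α t)*lfun m₁ m₂ (θ t) with hAP
    have h1 : HasDerivAt (fun r => -Real.cos (α r)) (Real.sin (α t) * AP) t := by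
      exact ((hdα t).cos).neg.congr_deriv (by rw [← hAP]; ring)
    have h2 : HasDerivAt (fun r => Real.sin (α r)) (Real.cos (α t) * AP) t := (hdα t).sin
    have h3 := h1.div h2 hσne
    exact h3.congr_deriv (by rw [show Real.sin (α t) * AP * Real.sin (α t) - -Real.cos (α t) * (Real.cos (α t) * AP)
      = AP from by linear_combination AP * Real.sin_sq_add_cos_sq (α t)])
  have humono : MonotoneOn (fun r => -Real.cos (α r)/Real.sin (α r)) (Icc 0 T₁) :=
    monoOn_of_hasDeriv hdu (fun t ht => by have h1 := hap t ht; have h2 := hσpos t ht; positivity)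
  have hu0' : -Real.cos (α 0)/Real.sin (α 0) = 0 := by rw [hα0]; simp
  have hsTne := (hspos T₁ (right_mem_Icc.2 hT.le)).ne'
  have hσTne := (hσpos T₁ (right_mem_Icc.2 hT.le)).ne'
  have hcσT : Real.cos (α T₁) = -Real.sin (α T₁) := by
    apply mul_right_cancel₀ hsTne
    linear_combination hratio
  have huT : -Real.cos (α T₁)/Real.sin (α T₁) = 1 := by
    rw [hcσT, neg_neg, div_self hσTne]
  have hu01 : ∀ t ∈ Icc 0 T₁, 0 ≤ -Real.cos (α t)/Real.sin (α t) ∧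
      -Real.cos (α t)/Real.sin (α t) ≤ 1 := by
    intro t ht
    constructor
    · rw [← hu0']
      exact humono (left_mem_Icc.2 hT.le) ht ht.1
    · rw [← huT]
      exact humono ht (right_mem_Icc.2 hT.le) ht.2
  have hcuσ : ∀ t ∈ Icc 0 T₁,
      Real.cos (α t) = -((-Real.cos (α t)/Real.sin (α t)) * Real.sin (α t)) := by
    intro t ht
    have hσ := (hσpos t ht).ne'
    field_simp
  have hσ2 : ∀ t ∈ Icc 0 T₁, 1 ≤ 2*(Real.sin (α t))^2 := by
    intro t ht
    have h1 := (hu01 t ht).2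
    have hσ := hσpos t ht
    have h2 : -Real.cos (α t) ≤ Real.sin (α t) := by rwa [div_le_one hσ] at h1
    exact two_sq_ge (hcle t ht) (Real.sin_sq_add_cos_sq (α t)) h2
  -- W facts
  have hdW : ∀ t, HasDerivAt (fun r => Real.sin (θ r)^m₁ * Real.cos (θ r)^m₂)
      (2*lfun m₁ m₂ (θ t)*Real.sin (α t)*(Real.sin (θ t)^m₁ * Real.cos (θ t)^m₂)) t := by
    intro t
    have h1 := ((hdθ t).sin).pow m₁
    have h2 := ((hdθ t).cos).pow m₂
    have h3 := h1.mul h2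
    refine h3.congr_deriv ?_
    obtain ⟨k, hk⟩ : ∃ k, m₁ = k + 1 := ⟨m₁ - 1, (Nat.succ_pred_eq_of_pos hm₁).symm⟩
    obtain ⟨j, hj⟩ : ∃ j, m₂ = j + 1 := ⟨m₂ - 1, (Nat.succ_pred_eq_of_pos hm₂).symm⟩
    rw [hk, hj]
    simp only [Nat.add_sub_cancel, Pi.pow_apply]
    unfold lfun
    rw [Real.sin_two_mul]
    push_cast
    ring
  have hWpos : ∀ t ∈ Icc 0 T₁, 0 < Real.sin (θ t)^m₁ * Real.cos (θ t)^m₂ := by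
    intro t ht
    have h1 := (hsinθ t ht).1
    have h2 := (hcosθ t ht).1
    positivity
  have hWle1 : ∀ t ∈ Icc 0 T₁, Real.sin (θ t)^m₁ * Real.cos (θ t)^m₂ ≤ 1 := by
    intro t ht
    exact mul_le_one₀ (pow_le_one₀ (hsinθ t ht).1.le (hsinθ t ht).2)
      (pow_nonneg (hcosθ t ht).1.le _) (pow_le_one₀ (hcosθ t ht).1.le (hcosθ t ht).2)
  have hWlecos : ∀ t ∈ Icc 0 T₁, Real.sin (θ t)^m₁ * Real.cos (θ t)^m₂ ≤ Real.cos (θ t) := by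
    intro t ht
    have h1 : Real.sin (θ t)^m₁ ≤ 1 := pow_le_one₀ (hsinθ t ht).1.le (hsinθ t ht).2
    have h2 : Real.cos (θ t)^m₂ ≤ Real.cos (θ t) := by
      have h3 := pow_le_pow_of_le_one (hcosθ t ht).1.le (hcosθ t ht).2 hm₂
      rwa [pow_one] at h3
    calc Real.sin (θ t)^m₁ * Real.cos (θ t)^m₂ ≤ 1 * Real.cos (θ t) :=
          mul_le_mul h1 h2 (pow_nonneg (hcosθ t ht).1.le _) zero_le_one
      _ = Real.cos (θ t) := one_mul _
  -- Step P : (W T₁)^2 ≤ π δ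
  have hPanti : AntitoneOn (fun r => (-Real.cos (α r)/Real.sin (α r)) *
      (Real.sin (θ r)^m₁*Real.cos (θ r)^m₂)^2 - 2*δ*(θ r - τ)) (Icc 0 T₁) := by
    apply antiOn_of_hasDeriv (F := fun t =>
      ((Real.sin (α t) * Real.sin (2*θ t) * (Real.exp (4/(g:ℝ) * ξ t) - M) +
        2*Real.cos (α t)*lfun m₁ m₂ (θ t)) / (Real.sin (α t))^2) *
          (Real.sin (θ t)^m₁*Real.cos (θ t)^m₂)^2 +
        (-Real.cos (α t)/Real.sin (α t)) * (2*(Real.sin (θ t)^m₁*Real.cos (θ t)^m₂)*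
          (2*lfun m₁ m₂ (θ t)*Real.sin (α t)*(Real.sin (θ t)^m₁*Real.cos (θ t)^m₂)))
        - 2*δ*(Real.sin (α t)*Real.sin (2*θ t)))
    · intro t ht
      have H := ((hdu t ht).mul ((hdW t).pow 2)).sub
        (((hdθ t).sub_const τ).const_mul (2*δ))
      exact H.congr_deriv (by norm_num [Pi.pow_apply])
    · intro t ht
      exact algP _ _ _ _ _ _ _ _ (hσpos t ht) (Real.sin_le_one _) (hspos t ht)
        (hcuσ t ht) (hu01 t ht).1 (hu01 t ht).2 (hσ2 t ht) (hl t ht)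
        (hXpos t ht).le (hXub t ht) (hWpos t ht) (hWle1 t ht)
  have hWe2 : (Real.sin (θ T₁)^m₁*Real.cos (θ T₁)^m₂)^2 ≤ Real.pi * δ := by
    have hPT := hPanti (left_mem_Icc.2 hT.le) (right_mem_Icc.2 hT.le) hT.le
    simp only at hPT
    rw [huT, hα0, hθ0] at hPT
    simp at hPT
    exact We2_le hδ0 hτ0 (hθlt T₁ (right_mem_Icc.2 hT.le)) (by linarith)
  have hKcos : Kc m₁ m₂ * Real.cos (θ T₁)^(2*m₂) ≤ Real.pi*δ := by
    have hsint : Real.sin τ ≤ Real.sin (θ T₁) := by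
      apply Real.strictMonoOn_sin.monotoneOn ⟨by linarith, hτπ.le⟩
        ⟨by linarith [hθge T₁ (right_mem_Icc.2 hT.le)],
          (hθlt T₁ (right_mem_Icc.2 hT.le)).le⟩
        (hθge T₁ (right_mem_Icc.2 hT.le))
    have hsinτ : 0 < Real.sin τ := Real.sin_pos_of_pos_of_lt_pi hτ0 (by linarith)
    have h2 : Kc m₁ m₂ ≤ Real.sin (θ T₁)^(2*m₁) := by
      unfold Kc
      rw [← hτdef]
      exact pow_le_pow_left₀ hsinτ.le hsint _
    have h3 : Real.sin (θ T₁)^(2*m₁) * Real.cos (θ T₁)^(2*m₂)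
        = (Real.sin (θ T₁)^m₁*Real.cos (θ T₁)^m₂)^2 := by ring
    have h4 : 0 ≤ Real.cos (θ T₁)^(2*m₂) :=
      pow_nonneg (hcosθ T₁ (right_mem_Icc.2 hT.le)).1.le _
    linarith [mul_le_mul_of_nonneg_right h2 h4, hWe2]
  have hθ1T : θ1 < θ T₁ := by
    have h1 : Kc m₁ m₂ * Real.cos (θ T₁)^(2*m₂) < Kc m₁ m₂ * Real.cos θ1^(2*m₂) :=
      lt_of_le_of_lt hKcos hs1
    have h2 : Real.cos (θ T₁) < Real.cos θ1 :=
      lt_of_pow_lt_pow_left₀ (2*m₂) hcosθ1.le ((mul_lt_mul_iff_right₀ hKc).1 h1)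
    by_contra h
    push_neg at h
    have h3 : Real.cos θ1 ≤ Real.cos (θ T₁) :=
      Real.cos_le_cos_of_nonneg_of_le_pi
        (by linarith [hθge T₁ (right_mem_Icc.2 hT.le)]) (by linarith) h
    linarith
  have hcosle : Real.cos (θ T₁) ≤ Real.cos θ1 := by
    exact (Real.cos_le_cos_of_nonneg_of_le_pi (by linarith) (by
      linarith [hθlt T₁ (right_mem_Icc.2 hT.le)]) hθ1T.le)
  obtain ⟨t₁, ht₁mem, ht₁⟩ := intermediate_value_Icc hT.le hcontθ.continuousOn
    (show θ1 ∈ Icc (θ 0) (θ T₁) from ⟨by rw [hθ0]; exact hθ1a.le, hθ1T.le⟩)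
  -- seed bound
  have hmin1 : cSix g m₁ m₂ ≤ cOne g m₁ m₂ * (θ1 - τ)/2 := by
    unfold cSix
    rw [← hθ1def, ← hτdef]
    exact min_le_left _ _
  have hmin2 : cSix g m₁ m₂ ≤ 1/(2*(θ1 - τ)) := by
    unfold cSix
    rw [← hθ1def, ← hτdef]
    exact min_le_right _ _
  have hseed : cSix g m₁ m₂ * ε ≤ -Real.cos (α t₁)/Real.sin (α t₁) := by
    rcases le_or_gt (ε/2) (ξ t₁ - L) with hcase | hcase
    · -- case A
      have hQ : MonotoneOn (fun r => (-Real.cos (α r)/Real.sin (α r)) -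
          cOne g m₁ m₂*ε/2*(θ r - τ)) (Icc 0 t₁) := by
        apply monoOn_of_hasDeriv (F := fun t =>
          ((Real.sin (α t) * Real.sin (2*θ t) * (Real.exp (4/(g:ℝ) * ξ t) - M) +
            2*Real.cos (α t)*lfun m₁ m₂ (θ t)) / (Real.sin (α t))^2) -
          cOne g m₁ m₂*ε/2*(Real.sin (α t)*Real.sin (2*θ t)))
        · intro t ht
          have htI : t ∈ Icc 0 T₁ := ⟨ht.1, le_trans ht.2 ht₁mem.2⟩
          exact (hdu t htI).sub (((hdθ t).sub_const τ).const_mul _)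
        · intro t ht
          have htI : t ∈ Icc 0 T₁ := ⟨ht.1, le_trans ht.2 ht₁mem.2⟩
          have hv : ε/2 ≤ ξ t - L := by
            have := hξanti htI ht₁mem ht.2
            linarith
          have hq : cOne g m₁ m₂ * ε/2 ≤ Real.exp (4/(g:ℝ) * ξ t) - M := by
            refine le_trans ?_ (hXlb t htI)
            linarith [mul_le_mul_of_nonneg_left hv hc1.le]
          have h5 := algQ (Real.cos (α t)) (Real.sin (α t)) (Real.sin (2*θ t))
            (Real.exp (4/(g:ℝ) * ξ t) - M) (lfun m₁ m₂ (θ t))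
            (-Real.cos (α t)/Real.sin (α t)) (cOne g m₁ m₂*ε/2)
            (hσpos t htI) (Real.sin_le_one _) (hspos t htI) (hcuσ t htI)
            (hu01 t htI).1 (hl t htI) (by positivity) hq
          linarith
      have h6 := hQ (left_mem_Icc.2 ht₁mem.1) (right_mem_Icc.2 ht₁mem.1) ht₁mem.1
      simp only at h6
      rw [hα0, hθ0] at h6
      simp at h6
      rw [ht₁] at h6
      have h7 : cOne g m₁ m₂*ε/2*(θ1 - τ) ≥ cSix g m₁ m₂ * ε := by
        have := mul_le_mul_of_nonneg_right hmin1 hε.le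
        linarith
      linarith
    · -- case B
      have hR : MonotoneOn (fun r => (-Real.cos (α t₁)/Real.sin (α t₁))*(θ r - τ) + ξ r)
          (Icc 0 t₁) := by
        apply monoOn_of_hasDeriv (F := fun t =>
          (-Real.cos (α t₁)/Real.sin (α t₁))*(Real.sin (α t)*Real.sin (2*θ t)) +
            Real.cos (α t) * Real.sin (2*θ t))
        · intro t ht
          exact (((hdθ t).sub_const τ).const_mul _).add (hdξ t)
        · intro t ht
          have htI : t ∈ Icc 0 T₁ := ⟨ht.1, le_trans ht.2 ht₁mem.2⟩
          exact algR _ _ _ _ _ (hσpos t htI) (hspos t htI) (hcuσ t htI)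
            (humono htI ht₁mem ht.2)
      have h6 := hR (left_mem_Icc.2 ht₁mem.1) (right_mem_Icc.2 ht₁mem.1) ht₁mem.1
      simp only at h6
      rw [hθ0, hξ0, ht₁] at h6
      simp at h6
      -- h6 : L + ε ≤ u1*(θ1 - τ) + ξ t₁
      have h8 : ε/2 < (-Real.cos (α t₁)/Real.sin (α t₁))*(θ1 - τ) := by linarith
      have hdpos : (0:ℝ) < θ1 - τ := by linarith
      have h9 : ε/(2*(θ1-τ)) ≤ -Real.cos (α t₁)/Real.sin (α t₁) := by
        rw [div_le_iff₀ (by linarith)]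
        linarith
      have h10 : cSix g m₁ m₂ * ε ≤ 1/(2*(θ1-τ)) * ε :=
        mul_le_mul_of_nonneg_right hmin2 hε.le
      have h11 : 1/(2*(θ1-τ)) * ε = ε/(2*(θ1-τ)) := by ring
      linarith
  have hu1pos : 0 < -Real.cos (α t₁)/Real.sin (α t₁) :=
    lt_of_lt_of_le (by positivity) hseed
  have hW1e : Wone m₁ m₂ = Real.sin θ1 ^ m₁ * Real.cos θ1 ^ m₂ := by
    unfold Wone
    rw [← hθ1def]
  -- transport
  have hTmono : MonotoneOn (fun r => (-Real.cos (α r)/Real.sin (α r)) *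
      (Real.sin (θ r)^m₁*Real.cos (θ r)^m₂)) (Icc t₁ T₁) := by
    apply monoOn_of_hasDeriv (F := fun t =>
      ((Real.sin (α t) * Real.sin (2*θ t) * (Real.exp (4/(g:ℝ) * ξ t) - M) +
        2*Real.cos (α t)*lfun m₁ m₂ (θ t)) / (Real.sin (α t))^2) *
          (Real.sin (θ t)^m₁*Real.cos (θ t)^m₂) +
        (-Real.cos (α t)/Real.sin (α t)) *
          (2*lfun m₁ m₂ (θ t)*Real.sin (α t)*(Real.sin (θ t)^m₁*Real.cos (θ t)^m₂)))
    · intro t ht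
      have htI : t ∈ Icc 0 T₁ := ⟨le_trans ht₁mem.1 ht.1, ht.2⟩
      exact (hdu t htI).mul (hdW t)
    · intro t ht
      have htI : t ∈ Icc 0 T₁ := ⟨le_trans ht₁mem.1 ht.1, ht.2⟩
      exact algT _ _ _ _ _ _ _ (hσpos t htI) (Real.sin_le_one _) (hspos t htI)
        (hcuσ t htI) (hu01 t htI).1 (hl t htI) (hXpos t htI).le (hWpos t htI).le
  have htrans : ∀ t ∈ Icc t₁ T₁,
      (-Real.cos (α t₁)/Real.sin (α t₁)) * Wone m₁ m₂ ≤
      (-Real.cos (α t)/Real.sin (α t)) * (Real.sin (θ t)^m₁*Real.cos (θ t)^m₂) := by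
    intro t ht
    have h := hTmono (left_mem_Icc.2 (le_trans ht.1 ht.2)) ht ht.1
    simp only at h
    rw [ht₁] at h
    rw [hW1e]
    exact h
  -- final comparison
  have hSmono : MonotoneOn (fun r =>
      ((-Real.cos (α t₁)/Real.sin (α t₁))*Wone m₁ m₂)*Real.log (Real.cos (θ r)) - ξ r)
      (Icc t₁ T₁) := by
    apply monoOn_of_hasDeriv (F := fun t =>
      ((-Real.cos (α t₁)/Real.sin (α t₁))*Wone m₁ m₂) *
        ((-Real.sin (θ t) * (Real.sin (α t)*Real.sin (2*θ t)))/Real.cos (θ t)) -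
        Real.cos (α t) * Real.sin (2*θ t))
    · intro t ht
      have htI : t ∈ Icc 0 T₁ := ⟨le_trans ht₁mem.1 ht.1, ht.2⟩
      exact ((((hdθ t).cos).log (hcosθ t htI).1.ne').const_mul _).sub (hdξ t)
    · intro t ht
      have htI : t ∈ Icc 0 T₁ := ⟨le_trans ht₁mem.1 ht.1, ht.2⟩
      exact algS _ _ _ _ _ _ _ _ (hσpos t htI) (hspos t htI) (hcuσ t htI)
        (hu01 t htI).1 (htrans t ht) (mul_pos hu1pos hW1).le
        (hsinθ t htI).1.le (hsinθ t htI).2 (hcosθ t htI).1 (hWlecos t htI)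
        (hWpos t htI).le
  have hS := hSmono (left_mem_Icc.2 (le_trans ht₁mem.1 ht₁mem.2 |> fun _ => ht₁mem.2))
    (right_mem_Icc.2 ht₁mem.2) ht₁mem.2
  simp only at hS
  rw [ht₁] at hS
  -- hS : u1*W1*log(cos θ1) - ξ t₁ ≤ u1*W1*log(cos θ T₁) - ξ T₁
  -- log bound
  have hcosθe := (hcosθ T₁ (right_mem_Icc.2 hT.le)).1
  have hle2 : Real.log (Real.cos (θ T₁)) ≤
      1/(2*(m₂:ℝ)) * Real.log (Real.pi*δ/Kc m₁ m₂) := by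
    have h1 : Real.cos (θ T₁)^(2*m₂) ≤ Real.pi*δ/Kc m₁ m₂ := by
      rw [le_div_iff₀ hKc]
      linarith [hKcos]
    have h2 := Real.log_le_log (by positivity) h1
    rw [Real.log_pow] at h2
    push_cast at h2
    rw [show 1/(2*(m₂:ℝ)) * Real.log (Real.pi*δ/Kc m₁ m₂)
      = Real.log (Real.pi*δ/Kc m₁ m₂)/(2*(m₂:ℝ)) by ring, le_div_iff₀ (by positivity)]
    linarith
  have hloginv : Real.log (Real.pi*δ/Kc m₁ m₂) = -Real.log (Kc m₁ m₂/(Real.pi*δ)) := by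
    rw [← Real.log_inv, inv_div]
  rw [hloginv, mul_neg] at hle2
  -- brackets
  have hb2pos : 0 < Real.log (Real.cos θ1) +
      1/(2*(m₂:ℝ)) * Real.log (Kc m₁ m₂/(Real.pi*δ)) := by
    exact pos_of_one_le_mul (by linarith [hs2] : 1 ≤ (cSix g m₁ m₂ * Wone m₁ m₂) *
      (Real.log (Real.cos θ1) + 1/(2*(m₂:ℝ)) * Real.log (Kc m₁ m₂/(Real.pi*δ))))
      (mul_pos hc6 hW1)
  have hbrack : Real.log (Real.cos θ1) + 1/(2*(m₂:ℝ)) * Real.log (Kc m₁ m₂/(Real.pi*δ))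
      ≤ Real.log (Real.cos θ1) - Real.log (Real.cos (θ T₁)) := by linarith
  have hb1pos : 0 ≤ Real.log (Real.cos θ1) - Real.log (Real.cos (θ T₁)) :=
    le_trans hb2pos.le hbrack
  -- assemble contradiction
  have hd1 : ξ t₁ - ξ T₁ < ε := by
    have h1 := hvle t₁ ht₁mem
    linarith
  have e1 : (-Real.cos (α t₁)/Real.sin (α t₁))*Wone m₁ m₂ *
      (Real.log (Real.cos θ1) - Real.log (Real.cos (θ T₁))) ≤ ξ t₁ - ξ T₁ := by
    linarith [hS]
  have e2 : (cSix g m₁ m₂*ε)*(Wone m₁ m₂ *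
        (Real.log (Real.cos θ1) - Real.log (Real.cos (θ T₁)))) ≤
      (-Real.cos (α t₁)/Real.sin (α t₁))*(Wone m₁ m₂ *
        (Real.log (Real.cos θ1) - Real.log (Real.cos (θ T₁)))) :=
    mul_le_mul_of_nonneg_right hseed (mul_nonneg hW1.le hb1pos)
  have e4 : (cSix g m₁ m₂*ε)*(Wone m₁ m₂ *
        (Real.log (Real.cos θ1) + 1/(2*(m₂:ℝ)) * Real.log (Kc m₁ m₂/(Real.pi*δ)))) ≤
      (cSix g m₁ m₂*ε)*(Wone m₁ m₂ *
        (Real.log (Real.cos θ1) - Real.log (Real.cos (θ T₁)))) := by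
    apply mul_le_mul_of_nonneg_left (mul_le_mul_of_nonneg_left hbrack hW1.le)
    positivity
  have e5 : ε*1 ≤ ε*(cSix g m₁ m₂ * Wone m₁ m₂ *
      (Real.log (Real.cos θ1) + 1/(2*(m₂:ℝ)) * Real.log (Kc m₁ m₂/(Real.pi*δ)))) :=
    mul_le_mul_of_nonneg_left hs2 hε.le
  linarith [e1, e2, e4, e5, hd1]



set_option maxHeartbeats 1000000 in
/-- Lemma 4.9: for `ε` small enough, if `ξ₀ = (g/4) ln m + ε` is of type 1 and
`T₁ > 0` is a time with `ξ'(T₁)/θ'(T₁) = -1` while `ξ' < 0` and `θ' > 0` on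
`(0, T₁]`, then `ξ(T₁) ≤ (g/4) ln m`. -/
theorem stmt19 (g m₁ m₂ : ℕ) (hg : g = 1 ∨ g = 2 ∨ g = 3 ∨ g = 4 ∨ g = 6)
    (hm₁ : 0 < m₁) (hm₂ : 0 < m₂)
    (Ξ Θ A : ℝ → ℝ → ℝ) (hfam : IsShootingFamily g m₁ m₂ Ξ Θ A) :
    ∃ ε₀ > (0 : ℝ), ∀ ε : ℝ, 0 < ε → ε < ε₀ →
      ∀ ξ₀ : ℝ, ξ₀ = (g : ℝ) / 4 * Real.log (mconst g m₁ m₂) + ε →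
        Type1 m₁ m₂ Ξ Θ A ξ₀ →
        ∀ T₁ > (0 : ℝ),
          ((Real.cos (A ξ₀ T₁) * Real.sin (2 * Θ ξ₀ T₁)) /
              (Real.sin (A ξ₀ T₁) * Real.sin (2 * Θ ξ₀ T₁)) = -1 ∧
            ∀ t ∈ Set.Ioc (0 : ℝ) T₁,
              Real.cos (A ξ₀ t) * Real.sin (2 * Θ ξ₀ t) < 0 ∧
              0 < Real.sin (A ξ₀ t) * Real.sin (2 * Θ ξ₀ t)) →
          Ξ ξ₀ T₁ ≤ (g : ℝ) / 4 * Real.log (mconst g m₁ m₂) := by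
  have hg1 : 1 ≤ g := by rcases hg with h | h | h | h | h <;> omega
  have hm₁' : (0:ℝ) < (m₁:ℝ) := by exact_mod_cast hm₁
  have hm₂' : (0:ℝ) < (m₂:ℝ) := by exact_mod_cast hm₂
  have hg0 : (0:ℝ) < (g:ℝ) := by exact_mod_cast Nat.lt_of_lt_of_le Nat.zero_lt_one hg1
  have hM0 : 0 < mconst g m₁ m₂ := by unfold mconst; positivity
  have hτ0 : 0 < thetaStar m₁ m₂ := by
    unfold thetaStar
    rw [show (0:ℝ) = Real.arctan 0 by simp]
    exact Real.arctan_strictMono (by rw [Real.sqrt_pos]; positivity)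
  have hτπ : thetaStar m₁ m₂ < Real.pi/2 := Real.arctan_lt_pi_div_two _
  have hπ : 0 < Real.pi := Real.pi_pos
  have hθ1a : thetaStar m₁ m₂ < th1 m₁ m₂ := by unfold th1; linarith
  have hθ1b : th1 m₁ m₂ < Real.pi/2 := by unfold th1; linarith
  have hθ10 : 0 < th1 m₁ m₂ := by linarith
  have hcosθ1 : 0 < Real.cos (th1 m₁ m₂) := Real.cos_pos_of_mem_Ioo ⟨by linarith, hθ1b⟩
  have hsinθ1 : 0 < Real.sin (th1 m₁ m₂) :=
    Real.sin_pos_of_pos_of_lt_pi hθ10 (by linarith)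
  have hW1 : 0 < Wone m₁ m₂ := by unfold Wone; positivity
  have hKc : 0 < Kc m₁ m₂ := by
    unfold Kc
    have : 0 < Real.sin (thetaStar m₁ m₂) := Real.sin_pos_of_pos_of_lt_pi hτ0 (by linarith)
    positivity
  have hc1 : 0 < cOne g m₁ m₂ := by unfold cOne; positivity
  have hc6 : 0 < cSix g m₁ m₂ := by
    unfold cSix
    exact lt_min (div_pos (mul_pos hc1 (sub_pos.2 hθ1a)) two_pos)
      (div_pos one_pos (by linarith))
  set R : ℝ := 2*(m₂:ℝ)*(1/(cSix g m₁ m₂ * Wone m₁ m₂) - Real.log (Real.cos (th1 m₁ m₂)))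
    with hRdef
  set d : ℝ := min (Kc m₁ m₂ * Real.cos (th1 m₁ m₂)^(2*m₂) / (2*Real.pi))
    (Kc m₁ m₂/Real.pi * Real.exp (-R)) with hddef
  have hd0 : 0 < d := by
    apply lt_min
    · positivity
    · positivity
  refine ⟨(g:ℝ)/4 * Real.log (1 + d/mconst g m₁ m₂), by
    have h1 : (1:ℝ) < 1 + d/mconst g m₁ m₂ := by
      have : 0 < d/mconst g m₁ m₂ := div_pos hd0 hM0
      linarith
    exact mul_pos (by positivity) (Real.log_pos h1), ?_⟩
  intro ε hε hεlt ξ₀ hξ₀ _htype1 T₁ hT₁ ⟨hrat, hsgn⟩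
  -- δ bounds
  have hδlt : del g m₁ m₂ ε < d := by
    have h1 : 4*ε/(g:ℝ) < Real.log (1 + d/mconst g m₁ m₂) := by
      have h2 : 4/(g:ℝ) * ((g:ℝ)/4 * Real.log (1 + d/mconst g m₁ m₂))
          = Real.log (1 + d/mconst g m₁ m₂) := by field_simp
      have h3 : 4*ε/(g:ℝ) = 4/(g:ℝ) * ε := by ring
      rw [h3, ← h2]
      apply mul_lt_mul_of_pos_left hεlt (by positivity)
    have h4 : Real.exp (4*ε/(g:ℝ)) < 1 + d/mconst g m₁ m₂ := by
      calc Real.exp (4*ε/(g:ℝ)) < Real.exp (Real.log (1 + d/mconst g m₁ m₂)) :=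
            Real.exp_lt_exp.2 h1
        _ = 1 + d/mconst g m₁ m₂ := Real.exp_log (by positivity)
    unfold del
    have h5 : mconst g m₁ m₂ * (d/mconst g m₁ m₂) = d := by field_simp
    nlinarith [hM0]
  have hδpos : 0 < del g m₁ m₂ ε := by
    unfold del
    apply mul_pos hM0
    have h4 : (0:ℝ) < 4*ε/(g:ℝ) := by positivity
    linarith [Real.add_one_le_exp (4*ε/(g:ℝ))]
  have hs1 : Real.pi * del g m₁ m₂ ε < Kc m₁ m₂ * Real.cos (th1 m₁ m₂) ^ (2*m₂) := by
    have h1 : d ≤ Kc m₁ m₂ * Real.cos (th1 m₁ m₂)^(2*m₂) / (2*Real.pi) := min_le_left _ _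
    have h2 : Real.pi * (Kc m₁ m₂ * Real.cos (th1 m₁ m₂)^(2*m₂) / (2*Real.pi))
        = Kc m₁ m₂ * Real.cos (th1 m₁ m₂)^(2*m₂) / 2 := by field_simp
    have h3 : 0 < Kc m₁ m₂ * Real.cos (th1 m₁ m₂)^(2*m₂) := by positivity
    nlinarith [mul_lt_mul_of_pos_left hδlt hπ, mul_le_mul_of_nonneg_left h1 hπ.le]
  have hs2 : 1 ≤ cSix g m₁ m₂ * Wone m₁ m₂ *
      (Real.log (Real.cos (th1 m₁ m₂)) +
        1/(2*(m₂:ℝ)) * Real.log (Kc m₁ m₂ / (Real.pi * del g m₁ m₂ ε))) := by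
    have h1 : del g m₁ m₂ ε < Kc m₁ m₂/Real.pi * Real.exp (-R) :=
      lt_of_lt_of_le hδlt (min_le_right _ _)
    have h2 : Real.exp R < Kc m₁ m₂ / (Real.pi * del g m₁ m₂ ε) := by
      rw [lt_div_iff₀ (by positivity)]
      have h3 : Real.exp R * (Real.pi * del g m₁ m₂ ε) <
          Real.exp R * (Real.pi * (Kc m₁ m₂/Real.pi * Real.exp (-R))) := by
        apply mul_lt_mul_of_pos_left _ (Real.exp_pos R)
        exact mul_lt_mul_of_pos_left h1 hπ
      have h4 : Real.exp R * (Real.pi * (Kc m₁ m₂/Real.pi * Real.exp (-R)))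
          = Kc m₁ m₂ := by
        rw [Real.exp_neg]
        field_simp
      linarith
    have h5 : R ≤ Real.log (Kc m₁ m₂ / (Real.pi * del g m₁ m₂ ε)) := by
      have := Real.log_le_log (Real.exp_pos R) h2.le
      rwa [Real.log_exp] at this
    have h6 : (1/(2*(m₂:ℝ))) * R = 1/(cSix g m₁ m₂ * Wone m₁ m₂)
        - Real.log (Real.cos (th1 m₁ m₂)) := by
      rw [hRdef]
      have hcw : cSix g m₁ m₂ * Wone m₁ m₂ ≠ 0 := (mul_pos hc6 hW1).ne'
      field_simp
    have h7 : cSix g m₁ m₂ * Wone m₁ m₂ *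
        (Real.log (Real.cos (th1 m₁ m₂)) + 1/(2*(m₂:ℝ)) * R) = 1 := by
      rw [h6]
      have hcw : cSix g m₁ m₂ * Wone m₁ m₂ ≠ 0 := (mul_pos hc6 hW1).ne'
      field_simp
      ring
    have h8 : (1/(2*(m₂:ℝ))) * R ≤
        1/(2*(m₂:ℝ)) * Real.log (Kc m₁ m₂ / (Real.pi * del g m₁ m₂ ε)) :=
      mul_le_mul_of_nonneg_left h5 (by positivity)
    calc (1:ℝ) = cSix g m₁ m₂ * Wone m₁ m₂ *
          (Real.log (Real.cos (th1 m₁ m₂)) + 1/(2*(m₂:ℝ)) * R) := h7.symm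
      _ ≤ _ := by
          apply mul_le_mul_of_nonneg_left _ (by positivity)
          linarith
  obtain ⟨hsol, hΞ0, hΘ0, hA0⟩ := hfam ξ₀
  -- translate the ratio hypothesis
  have hT₁Ioc : T₁ ∈ Set.Ioc (0:ℝ) T₁ := ⟨hT₁, le_refl _⟩
  have hσs := (hsgn T₁ hT₁Ioc).2
  have hratio' : Real.cos (A ξ₀ T₁) * Real.sin (2 * Θ ξ₀ T₁) =
      -(Real.sin (A ξ₀ T₁) * Real.sin (2 * Θ ξ₀ T₁)) := by
    have h1 := hrat
    rw [div_eq_iff hσs.ne'] at h1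
    linarith
  exact mainlem g m₁ m₂ hg1 hm₁ hm₂ (Ξ ξ₀) (Θ ξ₀) (A ξ₀) hsol ε hε
    (by rw [hΞ0, hξ₀]) hΘ0 hA0 T₁ hT₁ hratio' hsgn hs1 hs2
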